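/- Let ℒ = {l₁, l₂, …, l_s} be a set of s positive integers. If 𝒜 is an ℒ-intersecting family of pairwise distinct subsets of [n], then |𝒜| ≤ C(n−1, s) + C(n−1, s−1) + … + C(n−1, 0). -/

import Mathlib

open Finset Polynomial

namespace Snevily

/-! ### Finite differences of polynomials -/

noncomputable def Sd (D : ℕ) (p : ℝ[X]) : ℝ :=
  ∑ c ∈ Finset.range (D + 1), (-1 : ℝ) ^ c * (D.choose c : ℝ) * p.eval (c : ℝ)

lemma Sd_succ (D : ℕ) (p : ℝ[X]) : Sd (D + 1) p = Sd D (p - taylor 1 p) := by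
  have htay : ∀ c : ℕ, (taylor (1:ℝ) p).eval (c : ℝ) = p.eval ((c+1 : ℕ) : ℝ) := by
    intro c; rw [taylor_eval]; push_cast; ring_nf
  simp only [Sd, eval_sub, htay]
  rw [Finset.sum_range_succ' _ (D + 1)]
  have hpas : ∀ c : ℕ, ((D+1).choose (c+1) : ℝ) = (D.choose c : ℝ) + (D.choose (c+1) : ℝ) := by
    intro c; rw [Nat.choose_succ_succ]; push_cast; ring
  have hsplit : ∀ c ∈ Finset.range (D+1),
      (-1:ℝ)^(c+1) * ((D+1).choose (c+1) : ℝ) * p.eval (((c+1 : ℕ)) : ℝ)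
      = -((-1:ℝ)^c * (D.choose c : ℝ) * p.eval ((c+1:ℕ) : ℝ))
        + -((-1:ℝ)^c * (D.choose (c+1) : ℝ) * p.eval ((c+1:ℕ) : ℝ)) := by
    intro c _; rw [hpas]; ring
  rw [Finset.sum_congr rfl hsplit, Finset.sum_add_distrib]
  have h3 : ∑ c ∈ Finset.range (D+1), -((-1:ℝ)^c * (D.choose (c+1) : ℝ) * p.eval ((c+1:ℕ) : ℝ))
      = ∑ c ∈ Finset.range D, -((-1:ℝ)^c * (D.choose (c+1) : ℝ) * p.eval ((c+1:ℕ) : ℝ)) := by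
    rw [Finset.sum_range_succ, Nat.choose_succ_self]; simp
  have h4 : ∑ c ∈ Finset.range (D+1), (-1:ℝ)^c * (D.choose c : ℝ) * p.eval ((c:ℕ) : ℝ)
      = (∑ c ∈ Finset.range D, -((-1:ℝ)^c * (D.choose (c+1) : ℝ) * p.eval ((c+1:ℕ):ℝ)))
        + ((D.choose 0 : ℝ) * p.eval ((0:ℕ):ℝ)) := by
    rw [Finset.sum_range_succ' (fun c => (-1:ℝ)^c * (D.choose c : ℝ) * p.eval ((c:ℕ) : ℝ)) D]
    congr 1
    · apply Finset.sum_congr rfl; intro c _; ring_nf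
    · norm_num
  rw [h3]
  have expand0 : ∑ c ∈ Finset.range (D+1),
      ((-1:ℝ)^c * (D.choose c : ℝ) * (p.eval ((c:ℕ):ℝ) - p.eval ((c+1:ℕ):ℝ)))
      = (∑ c ∈ Finset.range (D+1), (-1:ℝ)^c * (D.choose c:ℝ) * p.eval ((c:ℕ):ℝ))
        + ∑ c ∈ Finset.range (D+1), -((-1:ℝ)^c * (D.choose c:ℝ) * p.eval ((c+1:ℕ):ℝ)) := by
    rw [← Finset.sum_add_distrib]; apply Finset.sum_congr rfl; intro c _; ring
  have goalrw : ∀ c ∈ Finset.range (D+1), (-1:ℝ)^c * (D.choose c : ℝ) * (p.eval ((c:ℕ):ℝ) - (taylor (1:ℝ) p).eval ((c:ℕ):ℝ))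
      = (-1:ℝ)^c * (D.choose c : ℝ) * (p.eval ((c:ℕ):ℝ) - p.eval ((c+1:ℕ):ℝ)) := by
    intro c _; rw [htay]
  calc (∑ c ∈ Finset.range (D+1),
          -((-1:ℝ)^c * (D.choose c : ℝ) * p.eval ((c+1:ℕ) : ℝ)))
        + ∑ c ∈ Finset.range D, -((-1:ℝ)^c * (D.choose (c+1) : ℝ) * p.eval ((c+1:ℕ) : ℝ))
        + (-1:ℝ)^0 * ((D+1).choose 0 : ℝ) * p.eval ((0:ℕ) : ℝ)
      = (∑ c ∈ Finset.range (D+1), (-1:ℝ)^c * (D.choose c : ℝ) * p.eval ((c:ℕ) : ℝ))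
        + ∑ c ∈ Finset.range (D+1), -((-1:ℝ)^c * (D.choose c:ℝ) * p.eval ((c+1:ℕ):ℝ)) := by
        rw [h4]; simp only [Nat.choose_zero_right]; push_cast; ring
    _ = ∑ c ∈ Finset.range (D+1), (-1:ℝ)^c * (D.choose c : ℝ) * (p.eval ((c:ℕ):ℝ) - p.eval ((c+1:ℕ):ℝ)) := by
        rw [expand0]
    _ = _ := by
        rw [← Finset.sum_congr rfl goalrw]

lemma Sd_eq (D : ℕ) : ∀ p : ℝ[X], p.natDegree ≤ D →
    Sd D p = (-1 : ℝ) ^ D * (D.factorial : ℝ) * p.coeff D := by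
  induction D with
  | zero =>
    intro p _
    simp [Sd, Polynomial.coeff_zero_eq_eval_zero]
  | succ D ih =>
    intro p hp
    have hc1 : (taylor (1:ℝ) p).coeff (D+1) = p.coeff (D+1) := by
      rw [taylor_coeff]
      have hd : (hasseDeriv (D+1) p).natDegree ≤ 0 := by
        have := natDegree_hasseDeriv_le p (D+1)
        omega
      rw [Polynomial.eq_C_of_natDegree_le_zero hd]
      rw [eval_C, hasseDeriv_coeff]
      simp
    have hcD : (taylor (1:ℝ) p).coeff D = p.coeff D + ((D:ℝ)+1) * p.coeff (D+1) := by
      rw [taylor_coeff]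
      have hd : (hasseDeriv D p).natDegree < 2 := by
        have := natDegree_hasseDeriv_le p D
        omega
      rw [Polynomial.eval_eq_sum_range' hd]
      rw [Finset.sum_range_succ, Finset.sum_range_one]
      simp only [hasseDeriv_coeff, one_pow, mul_one]
      have e1 : (0+D).choose D = 1 := by simp
      have e2 : (1+D).choose D = D + 1 := by
        rw [Nat.add_comm, Nat.choose_succ_self_right]
      rw [e1, e2]
      push_cast
      ring
    set q := p - taylor 1 p with hqdef
    have hq1 : q.natDegree ≤ D := by
      rw [Polynomial.natDegree_le_iff_coeff_eq_zero]
      intro N hN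
      rcases eq_or_lt_of_le (Nat.succ_le_of_lt hN) with h | h
      · rw [hqdef, Polynomial.coeff_sub, ← h, hc1, sub_self]
      · rw [hqdef, Polynomial.coeff_sub,
          Polynomial.coeff_eq_zero_of_natDegree_lt (lt_of_le_of_lt hp h),
          Polynomial.coeff_eq_zero_of_natDegree_lt
            (by rw [natDegree_taylor]; exact lt_of_le_of_lt hp h),
          sub_self]
    have hq2 : q.coeff D = -(((D:ℝ)+1) * p.coeff (D+1)) := by
      rw [hqdef, Polynomial.coeff_sub, hcD]; ring
    rw [Sd_succ, ih q hq1, hq2]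
    rw [Nat.factorial_succ]
    push_cast
    ring

variable {n : ℕ}

/-- indicator of `X ⊆ B` -/
noncomputable def eX (X B : Finset (Fin n)) : ℝ := if X ⊆ B then 1 else 0

/-- the polynomial-type functions we use -/
noncomputable def pf (E : Finset (Fin n)) (R : Finset ℝ) (B : Finset (Fin n)) : ℝ :=
  ∏ r ∈ R, (((B ∩ E).card : ℝ) - r)

lemma reindex_lemma {M : Type*} [AddCommMonoid M] (E : Finset (Fin n))
    (f : Finset (Fin n) → Fin n → M) :
    ∑ X ∈ E.powerset, ∑ y ∈ E \ X, f X y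
      = ∑ X ∈ E.powerset, ∑ y ∈ X, f (X.erase y) y := by
  rw [Finset.sum_sigma', Finset.sum_sigma']
  refine Finset.sum_bij' (fun p _ => (⟨insert p.2 p.1, p.2⟩ : Σ _ : Finset (Fin n), Fin n))
    (fun p _ => (⟨p.1.erase p.2, p.2⟩ : Σ _ : Finset (Fin n), Fin n)) ?_ ?_ ?_ ?_ ?_
  · rintro ⟨X, y⟩ hp
    simp only [Finset.mem_sigma, Finset.mem_powerset, Finset.mem_sdiff] at hp ⊢
    exact ⟨Finset.insert_subset hp.2.1 hp.1, Finset.mem_insert_self _ _⟩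
  · rintro ⟨X, y⟩ hp
    simp only [Finset.mem_sigma, Finset.mem_powerset, Finset.mem_sdiff] at hp ⊢
    refine ⟨(Finset.erase_subset _ _).trans hp.1, hp.1 hp.2, ?_⟩
    simp
  · rintro ⟨X, y⟩ hp
    simp only [Finset.mem_sigma, Finset.mem_powerset, Finset.mem_sdiff] at hp
    simp [Finset.erase_insert hp.2.2]
  · rintro ⟨X, y⟩ hp
    simp only [Finset.mem_sigma, Finset.mem_powerset, Finset.mem_sdiff] at hp
    simp [Finset.insert_erase hp.2]
  · rintro ⟨X, y⟩ hp
    simp only [Finset.mem_sigma, Finset.mem_powerset, Finset.mem_sdiff] at hp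
    rw [Finset.erase_insert hp.2.2]

lemma key_identity (E X B : Finset (Fin n)) (r : ℝ) (hXE : X ⊆ E) :
    (((B ∩ E).card : ℝ) - r) * eX X B
      = ((X.card : ℝ) - r) * eX X B + ∑ y ∈ E \ X, eX (insert y X) B := by
  by_cases hXB : X ⊆ B
  · have h1 : ∀ y ∈ E \ X, eX (insert y X) B = if y ∈ B then (1:ℝ) else 0 := by
      intro y _
      unfold eX
      by_cases hy : y ∈ B
      · rw [if_pos hy, if_pos (Finset.insert_subset hy hXB)]
      · rw [if_neg hy, if_neg (fun hc => hy (hc (Finset.mem_insert_self _ _)))]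
    rw [Finset.sum_congr rfl h1, Finset.sum_boole]
    have h2 : Finset.filter (· ∈ B) (E \ X) = (B ∩ E) \ X := by
      ext z
      simp only [Finset.mem_filter, Finset.mem_sdiff, Finset.mem_inter]
      tauto
    rw [h2]
    have hsub : X ⊆ B ∩ E := Finset.subset_inter hXB hXE
    rw [Finset.card_sdiff_of_subset hsub]
    have hle : X.card ≤ (B ∩ E).card := Finset.card_le_card hsub
    unfold eX
    rw [if_pos hXB]
    push_cast [hle]
    ring
  · have h0 : eX X B = 0 := if_neg hXB
    have h1 : ∀ y ∈ E \ X, eX (insert y X) B = 0 := by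
      intro y _
      exact if_neg (fun hc => hXB ((Finset.subset_insert y X).trans hc))
    rw [Finset.sum_congr rfl h1, h0]
    simp

/-- Expansion of the polynomial-type functions in the indicator basis. -/
lemma expand (E : Finset (Fin n)) (R : Finset ℝ) :
    ∃ w : Finset (Fin n) → ℝ,
      (∀ X, w X ≠ 0 → X ⊆ E ∧ X.card ≤ R.card) ∧
      ∀ B, pf E R B = ∑ X ∈ E.powerset, w X * eX X B := by
  classical
  induction R using Finset.induction_on with
  | empty =>
    refine ⟨fun X => if X = ∅ then 1 else 0, ?_, ?_⟩
    · intro X hX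
      by_cases h : X = ∅
      · subst h; simp
      · simp [h] at hX
    · intro B
      rw [Finset.sum_eq_single ∅]
      · simp [pf, eX]
      · intro X _ hX; simp [hX]
      · intro h; exact absurd (Finset.empty_mem_powerset E) h
  | insert _ _ hr ih =>
    rename_i r R
    obtain ⟨w, hw, hwB⟩ := ih
    refine ⟨fun X => if X ⊆ E then ((X.card : ℝ) - r) * w X + ∑ y ∈ X, w (X.erase y) else 0,
      ?_, ?_⟩
    · intro X hX
      dsimp only at hX
      by_cases hXE : X ⊆ E
      · refine ⟨hXE, ?_⟩
        rw [if_pos hXE] at hX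
        rw [Finset.card_insert_of_notMem hr]
        by_cases h1 : ((X.card : ℝ) - r) * w X ≠ 0
        · have := (hw X (by intro h; rw [h, mul_zero] at h1; exact h1 rfl)).2
          omega
        · push_neg at h1
          rw [h1, zero_add] at hX
          obtain ⟨y, hy, hyne⟩ := Finset.exists_ne_zero_of_sum_ne_zero hX
          have := (hw _ hyne).2
          rw [Finset.card_erase_of_mem hy] at this
          omega
      · rw [if_neg hXE] at hX; exact absurd rfl hX
    · intro B
      have hstep : pf E (insert r R) B = (((B ∩ E).card : ℝ) - r) * pf E R B := by
        rw [pf, Finset.prod_insert hr]; rfl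
      rw [hstep, hwB, Finset.mul_sum]
      have h1 : ∀ X ∈ E.powerset,
          (((B ∩ E).card : ℝ) - r) * (w X * eX X B)
            = ((X.card : ℝ) - r) * w X * eX X B + ∑ y ∈ E \ X, w X * eX (insert y X) B := by
        intro X hX
        rw [Finset.mem_powerset] at hX
        have := key_identity E X B r hX
        calc (((B ∩ E).card : ℝ) - r) * (w X * eX X B)
            = w X * ((((B ∩ E).card : ℝ) - r) * eX X B) := by ring
          _ = w X * (((X.card : ℝ) - r) * eX X B + ∑ y ∈ E \ X, eX (insert y X) B) := by rw [this]
          _ = _ := by rw [mul_add, Finset.mul_sum]; ring_nf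
      rw [Finset.sum_congr rfl h1, Finset.sum_add_distrib]
      rw [reindex_lemma E (fun X y => w X * eX (insert y X) B)]
      rw [← Finset.sum_add_distrib]
      apply Finset.sum_congr rfl
      intro X hX
      rw [Finset.mem_powerset] at hX
      dsimp only
      rw [if_pos hX]
      have h3 : ∑ y ∈ X, w (X.erase y) * eX (insert y (X.erase y)) B
          = (∑ y ∈ X, w (X.erase y)) * eX X B := by
        rw [Finset.sum_mul]
        apply Finset.sum_congr rfl
        intro y hy
        rw [Finset.insert_erase hy]
      rw [h3]
      ring

/-- split a sum over the powerset of a disjoint union -/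
lemma sum_powerset_union {u v : Finset (Fin n)} (huv : Disjoint u v)
    {M : Type*} [AddCommMonoid M] (f : Finset (Fin n) → M) :
    ∑ B ∈ (u ∪ v).powerset, f B = ∑ C ∈ u.powerset, ∑ D ∈ v.powerset, f (C ∪ D) := by
  have hd := Finset.disjoint_left.mp huv
  rw [Finset.sum_sigma']
  refine (Finset.sum_bij'
    (i := fun (p : Σ _ : Finset (Fin n), Finset (Fin n)) (_ : p ∈ u.powerset.sigma fun _ => v.powerset) => p.1 ∪ p.2)
    (j := fun (B : Finset (Fin n)) (_ : B ∈ (u ∪ v).powerset) =>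
      (⟨B ∩ u, B ∩ v⟩ : Σ _ : Finset (Fin n), Finset (Fin n))) ?_ ?_ ?_ ?_ ?_).symm
  · rintro ⟨C, D⟩ hp
    simp only [Finset.mem_sigma, Finset.mem_powerset] at hp ⊢
    exact Finset.union_subset_union hp.1 hp.2
  · intro B hB
    simp only [Finset.mem_sigma, Finset.mem_powerset]
    exact ⟨Finset.inter_subset_right, Finset.inter_subset_right⟩
  · rintro ⟨C, D⟩ hp
    simp only [Finset.mem_sigma, Finset.mem_powerset] at hp
    have h1 : (C ∪ D) ∩ u = C := by
      ext z
      simp only [Finset.mem_inter, Finset.mem_union]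
      constructor
      · rintro ⟨hz1 | hz2, hzu⟩
        · exact hz1
        · exact absurd (hp.2 hz2) (fun h => hd hzu h)
      · intro hz; exact ⟨Or.inl hz, hp.1 hz⟩
    have h2 : (C ∪ D) ∩ v = D := by
      ext z
      simp only [Finset.mem_inter, Finset.mem_union]
      constructor
      · rintro ⟨hz1 | hz2, hzv⟩
        · exact absurd hzv (fun h => hd (hp.1 hz1) h)
        · exact hz2
      · intro hz; exact ⟨Or.inr hz, hp.2 hz⟩
    simp [h1, h2]
  · intro B hB
    simp only [Finset.mem_powerset] at hB
    have : (B ∩ u) ∪ (B ∩ v) = B := by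
      rw [← Finset.inter_union_distrib_left, Finset.inter_eq_left.mpr hB]
    simp [this]
  · rintro ⟨C, D⟩ hp
    rfl

lemma cast_alternating (x : Finset (Fin n)) :
    (∑ m ∈ x.powerset, (-1 : ℝ) ^ m.card) = if x = ∅ then 1 else 0 := by
  have h := Finset.sum_powerset_neg_one_pow_card (x := x)
  have h2 := congrArg (fun z : ℤ => (z : ℝ)) h
  push_cast at h2
  rw [h2]

/-- Möbius evaluation of the polynomial-type functions. -/
lemma mu_pf (X E : Finset (Fin n)) (R : Finset ℝ) :
    ∑ B ∈ X.powerset, (-1 : ℝ) ^ B.card * pf E R B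
      = (if X ⊆ E then (1:ℝ) else 0) * Sd X.card (∏ r ∈ R, (Polynomial.X - Polynomial.C r)) := by
  classical
  have hXdecomp : (X ∩ E) ∪ (X \ E) = X := by
    ext z; simp only [Finset.mem_union, Finset.mem_inter, Finset.mem_sdiff]; tauto
  have hdisj : Disjoint (X ∩ E) (X \ E) := by
    rw [Finset.disjoint_left]
    intro z hz1 hz2
    exact (Finset.mem_sdiff.mp hz2).2 (Finset.mem_inter.mp hz1).2
  have hmain : ∑ B ∈ X.powerset, (-1:ℝ)^B.card * pf E R B
      = ∑ C ∈ (X ∩ E).powerset, ∑ D ∈ (X \ E).powerset, (-1:ℝ)^(C ∪ D).card * pf E R (C ∪ D) := by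
    conv_lhs => rw [← hXdecomp]
    exact sum_powerset_union hdisj _
  rw [hmain]
  have hterm : ∀ C ∈ (X ∩ E).powerset, ∀ D ∈ (X \ E).powerset,
      (-1:ℝ)^(C ∪ D).card * pf E R (C ∪ D)
        = ((-1:ℝ)^C.card * (∏ r ∈ R, (Polynomial.X - Polynomial.C r)).eval (C.card : ℝ))
          * ((-1:ℝ)^D.card) := by
    intro C hC D hD
    rw [Finset.mem_powerset] at hC hD
    have hCD : Disjoint C D := by
      rw [Finset.disjoint_left]
      intro z hz1 hz2
      exact (Finset.mem_sdiff.mp (hD hz2)).2 (Finset.mem_inter.mp (hC hz1)).2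
    have hcard : (C ∪ D).card = C.card + D.card := Finset.card_union_of_disjoint hCD
    have hCDE : (C ∪ D) ∩ E = C := by
      ext z
      simp only [Finset.mem_inter, Finset.mem_union]
      constructor
      · rintro ⟨hz1 | hz2, hzE⟩
        · exact hz1
        · exact absurd hzE (Finset.mem_sdiff.mp (hD hz2)).2
      · intro hz; exact ⟨Or.inl hz, (Finset.mem_inter.mp (hC hz)).2⟩
    rw [pf, hCDE, hcard, pow_add]
    rw [Polynomial.eval_prod]
    simp only [Polynomial.eval_sub, Polynomial.eval_X, Polynomial.eval_C]
    ring
  calc ∑ C ∈ (X ∩ E).powerset, ∑ D ∈ (X \ E).powerset, (-1:ℝ)^(C ∪ D).card * pf E R (C ∪ D)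
      = ∑ C ∈ (X ∩ E).powerset, ∑ D ∈ (X \ E).powerset,
          ((-1:ℝ)^C.card * (∏ r ∈ R, (Polynomial.X - Polynomial.C r)).eval (C.card : ℝ))
            * ((-1:ℝ)^D.card) := by
        apply Finset.sum_congr rfl; intro C hC; apply Finset.sum_congr rfl; intro D hD
        exact hterm C hC D hD
    _ = (∑ C ∈ (X ∩ E).powerset,
          (-1:ℝ)^C.card * (∏ r ∈ R, (Polynomial.X - Polynomial.C r)).eval (C.card : ℝ))
        * (∑ D ∈ (X \ E).powerset, (-1:ℝ)^D.card) := by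
        rw [Finset.sum_mul_sum]
    _ = _ := by
        rw [cast_alternating]
        by_cases hXE : X ⊆ E
        · have hXEeq : X ∩ E = X := Finset.inter_eq_left.mpr hXE
          have hempty : X \ E = ∅ := Finset.sdiff_eq_empty_iff_subset.mpr hXE
          rw [hempty, if_pos rfl, if_pos hXE, hXEeq, mul_one, one_mul]
          refine Eq.trans (Finset.sum_powerset_apply_card
            (fun m => (-1:ℝ)^m * (∏ r ∈ R, (Polynomial.X - Polynomial.C r)).eval (m : ℝ))) ?_
          unfold Sd
          apply Finset.sum_congr rfl
          intro c _
          rw [nsmul_eq_mul]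
          ring
        · have hne : X \ E ≠ ∅ := fun h => hXE (Finset.sdiff_eq_empty_iff_subset.mp h)
          rw [if_neg hne, if_neg hXE, mul_zero, zero_mul]

lemma natDegree_prod_linear (R : Finset ℝ) :
    (∏ r ∈ R, (Polynomial.X - Polynomial.C r)).natDegree = R.card := by
  rw [Polynomial.natDegree_prod_of_monic _ _ (fun r _ => Polynomial.monic_X_sub_C r)]
  simp [Polynomial.natDegree_X_sub_C]

/-- `Sd` of a product of `card < D` linear factors vanishes -/
lemma Sd_prod_zero (R : Finset ℝ) {D : ℕ} (h : R.card < D) :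
    Sd D (∏ r ∈ R, (Polynomial.X - Polynomial.C r)) = 0 := by
  rw [Sd_eq D _ (by rw [natDegree_prod_linear]; omega)]
  rw [Polynomial.coeff_eq_zero_of_natDegree_lt (by rw [natDegree_prod_linear]; omega)]
  ring

lemma Sd_prod_ne_zero (R : Finset ℝ) :
    Sd R.card (∏ r ∈ R, (Polynomial.X - Polynomial.C r)) ≠ 0 := by
  rw [Sd_eq R.card _ (le_of_eq (natDegree_prod_linear R))]
  have hm : (∏ r ∈ R, (Polynomial.X - Polynomial.C r)).Monic :=
    Polynomial.monic_prod_of_monic _ _ (fun r _ => Polynomial.monic_X_sub_C r)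
  have : (∏ r ∈ R, (Polynomial.X - Polynomial.C r)).coeff R.card = 1 := by
    have := hm.coeff_natDegree
    rwa [natDegree_prod_linear] at this
  rw [this, mul_one]
  apply mul_ne_zero
  · exact pow_ne_zero _ (by norm_num)
  · exact_mod_cast Nat.factorial_ne_zero R.card


open scoped Classical in
/-- obstructed sets -/
def Ob (e : Fin n) (A : Finset (Finset (Fin n))) (a : Finset (Fin n)) : Prop :=
  e ∉ a ∧ ∃ S ∈ A, e ∈ S ∧ a ⊆ S

open scoped Classical in
noncomputable def epsR (e : Fin n) (a : Finset (Fin n)) : ℝ := if e ∈ a then 1 else 0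

open scoped Classical in
noncomputable def Ff (L : Finset ℕ) (e : Fin n) (A : Finset (Finset (Fin n)))
    (a : Finset (Fin n)) : Finset (Fin n) → ℝ :=
  if Ob e A a then pf a ((L.filter (· ≤ a.card)).image (fun l : ℕ => (l : ℝ)))
  else pf (a.erase e) ((L.filter (· < a.card)).image (fun l : ℕ => (l : ℝ) - epsR e a))

lemma erase_inter_erase (e : Fin n) (a b : Finset (Fin n)) :
    (a.erase e) ∩ (b.erase e) = (a ∩ b).erase e := by
  ext z
  simp only [Finset.mem_inter, Finset.mem_erase]
  tauto

theorem indep (L : Finset ℕ) (hLpos : ∀ x ∈ L, 0 < x) (e : Fin n)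
    (A : Finset (Finset (Fin n)))
    (hAL : ∀ a ∈ A, ∀ b ∈ A, a ≠ b → (a ∩ b).card ∈ L)
    (γ : Finset (Fin n) → ℝ)
    (hrel : ∀ B, ∑ a ∈ A, γ a * Ff L e A a B = 0) :
    ∀ a ∈ A, γ a = 0 := by
  classical
  -- every set has card ≤ n
  have hcardn : ∀ a : Finset (Fin n), a.card ≤ n := by
    intro a
    calc a.card ≤ (Finset.univ : Finset (Fin n)).card := Finset.card_le_card (Finset.subset_univ a)
      _ = n := by simp
  ------------------------------------------------------------------
  -- STEP 2 : unobstructed sets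
  ------------------------------------------------------------------
  have hUaux : ∀ k, ∀ a ∈ A, ¬ Ob e A a → (if e ∈ a then 0 else n+1) + a.card < k → γ a = 0 := by
    intro k
    induction k with
    | zero => intro a _ _ h; omega
    | succ k ih =>
      intro a ha hOb hlt
      by_cases hk : (if e ∈ a then 0 else n+1) + a.card < k
      · exact ih a ha hOb hk
      · have h0 := hrel (a.erase e)
        rw [← Finset.add_sum_erase A _ ha] at h0
        have hz : ∀ b ∈ A.erase a, γ b * Ff L e A b (a.erase e) = 0 := by
          intro b hb
          have hbA : b ∈ A := Finset.mem_of_mem_erase hb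
          have hba : b ≠ a := Finset.ne_of_mem_erase hb
          have htL : (a ∩ b).card ∈ L := hAL a ha b hbA (fun h => hba h.symm)
          by_cases hObb : Ob e A b
          · -- obstructed sets vanish at every point a.erase e
            have heb : e ∉ b := hObb.1
            have hFz : Ff L e A b (a.erase e) = 0 := by
              rw [Ff, if_pos hObb, pf]
              apply Finset.prod_eq_zero (i := (((a ∩ b).card : ℕ) : ℝ))
              · have hmem : (a ∩ b).card ∈ L.filter (fun l => l ≤ b.card) :=
                  Finset.mem_filter.mpr ⟨htL, Finset.card_le_card Finset.inter_subset_right⟩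
                exact Finset.mem_image_of_mem (fun l : ℕ => (l : ℝ)) hmem
              · have hinter : (a.erase e) ∩ b = a ∩ b := by
                  ext z
                  simp only [Finset.mem_inter, Finset.mem_erase]
                  constructor
                  · rintro ⟨⟨_, hz⟩, hzb⟩; exact ⟨hz, hzb⟩
                  · rintro ⟨hza, hzb⟩
                    exact ⟨⟨fun h => heb (h ▸ hzb), hza⟩, hzb⟩
                rw [hinter, sub_self]
            rw [hFz, mul_zero]
          · by_cases hωb : (if e ∈ b then 0 else n+1) + b.card < k
            · rw [ih b hbA hObb hωb, zero_mul]
            · -- the triangular zero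
              have hbna : ¬ b ⊆ a := by
                intro hsub
                by_cases hea : e ∈ a <;> by_cases heb : e ∈ b
                · rw [if_pos hea] at hk hlt
                  rw [if_pos heb] at hωb
                  exact hba (Finset.eq_of_subset_of_card_le hsub (by omega))
                · exact hObb ⟨heb, a, ha, hea, hsub⟩
                · have := hcardn b
                  rw [if_neg hea] at hk hlt
                  rw [if_pos heb] at hωb
                  omega
                · rw [if_neg hea] at hk hlt
                  rw [if_neg heb] at hωb
                  exact hba (Finset.eq_of_subset_of_card_le hsub (by omega))
              have htlt : (a ∩ b).card < b.card := by
                refine lt_of_le_of_ne (Finset.card_le_card Finset.inter_subset_right) ?_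
                intro h
                apply hbna
                have : a ∩ b = b := Finset.eq_of_subset_of_card_le Finset.inter_subset_right (le_of_eq h.symm)
                rw [← this]
                exact Finset.inter_subset_left
              have hcase : ¬ (e ∉ a ∧ e ∈ b) := by
                rintro ⟨hea, heb⟩
                have := hcardn b
                rw [if_neg hea] at hk hlt
                rw [if_pos heb] at hωb
                omega
              have hFz : Ff L e A b (a.erase e) = 0 := by
                rw [Ff, if_neg hObb, pf]
                apply Finset.prod_eq_zero (i := (((a ∩ b).card : ℕ) : ℝ) - epsR e b)
                · have hmem : (a ∩ b).card ∈ L.filter (fun l => l < b.card) :=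
                    Finset.mem_filter.mpr ⟨htL, htlt⟩
                  exact Finset.mem_image_of_mem (fun l : ℕ => (l : ℝ) - epsR e b) hmem
                · rw [erase_inter_erase]
                  by_cases heb : e ∈ b
                  · have hea : e ∈ a := by
                      by_contra hea
                      exact hcase ⟨hea, heb⟩
                    have heab : e ∈ a ∩ b := Finset.mem_inter.mpr ⟨hea, heb⟩
                    rw [Finset.card_erase_of_mem heab]
                    have h1 : 1 ≤ (a ∩ b).card := Finset.card_pos.mpr ⟨e, heab⟩
                    rw [epsR, if_pos heb]
                    push_cast [h1]
                    ring
                  · have heab : e ∉ a ∩ b := fun h => heb (Finset.mem_inter.mp h).2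
                    rw [Finset.erase_eq_of_notMem heab]
                    rw [epsR, if_neg heb]
                    ring
              rw [hFz, mul_zero]
        rw [Finset.sum_eq_zero hz, add_zero] at h0
        have hFne : Ff L e A a (a.erase e) ≠ 0 := by
          rw [Ff, if_neg hOb, pf]
          rw [Finset.prod_ne_zero_iff]
          intro r hr
          obtain ⟨l, hl, rfl⟩ := Finset.mem_image.mp hr
          have hlda : l < a.card :=
            (Finset.mem_filter.mp (show l ∈ L.filter (fun x => x < a.card) from hl)).2
          rw [Finset.inter_self]
          by_cases hea : e ∈ a
          · rw [Finset.card_erase_of_mem hea]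
            have h1 : 1 ≤ a.card := Finset.card_pos.mpr ⟨e, hea⟩
            rw [epsR, if_pos hea]
            push_cast [h1]
            intro hcontra
            have : (l : ℝ) = (a.card : ℝ) := by linarith
            have : l = a.card := by exact_mod_cast this
            omega
          · rw [Finset.erase_eq_of_notMem hea, epsR, if_neg hea]
            intro hcontra
            have : (l : ℝ) = (a.card : ℝ) := by linarith
            have : l = a.card := by exact_mod_cast this
            omega
        rcases mul_eq_zero.mp h0 with h | h
        · exact h
        · exact absurd h hFne
  have hU : ∀ a ∈ A, ¬ Ob e A a → γ a = 0 := by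
    intro a ha h
    exact hUaux ((if e ∈ a then 0 else n+1) + a.card + 1) a ha h (Nat.lt_succ_self _)
  ------------------------------------------------------------------
  -- STEP 3 : obstructed sets
  ------------------------------------------------------------------
  have hObL : ∀ a ∈ A, Ob e A a → a.card ∈ L := by
    rintro a ha ⟨hea, S, hS, heS, haS⟩
    have hne : a ≠ S := fun h => hea (h ▸ heS)
    have := hAL a ha S hS hne
    rwa [Finset.inter_eq_left.mpr haS] at this
  have hOaux : ∀ j, ∀ T ∈ A, Ob e A T → n < T.card + j → γ T = 0 := by
    intro j
    induction j with
    | zero => intro T _ _ h; have := hcardn T; omega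
    | succ j ih =>
      intro T hT hObT hn
      have hk0L : T.card ∈ L := hObL T hT hObT
      set k0 := T.card with hk0
      set D := (L.filter (fun l => l ≤ k0)).card with hD
      have hDk : D ≤ k0 := by
        have hsub : L.filter (fun l => l ≤ k0) ⊆ Finset.Icc 1 k0 := by
          intro l hl
          rw [Finset.mem_filter] at hl
          rw [Finset.mem_Icc]
          exact ⟨hLpos l hl.1, hl.2⟩
        calc D ≤ (Finset.Icc 1 k0).card := Finset.card_le_card hsub
          _ = k0 := by rw [Nat.card_Icc]; omega
      set Φ := A.filter (fun x => Ob e A x ∧ x.card = k0) with hΦ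
      set Rel : Finset (Fin n) → ℝ := fun X => ∑ x ∈ Φ, γ x * eX X x with hRel
      -- the common nonzero constant
      have hcard_image : ∀ m : ℕ,
          ((L.filter (fun l => l ≤ m)).image (fun l : ℕ => (l : ℝ))).card
            = (L.filter (fun l => l ≤ m)).card := by
        intro m
        apply Finset.card_image_of_injective
        exact fun x y h => Nat.cast_injective h
      have hprod_image : ∀ m : ℕ,
          (∏ r ∈ (L.filter (fun l => l ≤ m)).image (fun l : ℕ => (l : ℝ)),
            (Polynomial.X - Polynomial.C r))
          = ∏ l ∈ L.filter (fun l => l ≤ m), (Polynomial.X - Polynomial.C (l : ℝ)) := by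
        intro m
        rw [Finset.prod_image]
        intro x _ y _ h
        exact Nat.cast_injective h
      have hcst : Sd D (∏ l ∈ L.filter (fun l => l ≤ k0), (Polynomial.X - Polynomial.C (l:ℝ))) ≠ 0 := by
        rw [← hprod_image k0]
        have : D = ((L.filter (fun l => l ≤ k0)).image (fun l : ℕ => (l : ℝ))).card := by
          rw [hcard_image k0]
        rw [this]
        exact Sd_prod_ne_zero _
      -- (a) : the top-grade relation
      have hmu : ∀ X : Finset (Fin n), X.card = D → Rel X = 0 := by
        intro X hX
        have h1 : ∑ x ∈ A, γ x * (∑ B ∈ X.powerset, (-1:ℝ)^B.card * Ff L e A x B) = 0 := by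
          have hswap : ∑ x ∈ A, γ x * (∑ B ∈ X.powerset, (-1:ℝ)^B.card * Ff L e A x B)
              = ∑ B ∈ X.powerset, (-1:ℝ)^B.card * (∑ x ∈ A, γ x * Ff L e A x B) := by
            simp_rw [Finset.mul_sum]
            rw [Finset.sum_comm]
            apply Finset.sum_congr rfl
            intro B _
            apply Finset.sum_congr rfl
            intro x _
            ring
          rw [hswap]
          apply Finset.sum_eq_zero
          intro B _
          rw [hrel B, mul_zero]
        have h2 : ∑ x ∈ A, γ x * (∑ B ∈ X.powerset, (-1:ℝ)^B.card * Ff L e A x B)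
            = Sd D (∏ l ∈ L.filter (fun l => l ≤ k0), (Polynomial.X - Polynomial.C (l:ℝ))) * Rel X := by
          rw [hRel]
          dsimp only
          rw [Finset.mul_sum]
          rw [← Finset.sum_subset (Finset.filter_subset (fun x => Ob e A x ∧ x.card = k0) A)]
          · apply Finset.sum_congr rfl
            intro x hx
            rw [Finset.mem_filter] at hx
            obtain ⟨hxA, hxOb, hxcard⟩ := hx
            rw [Ff, if_pos hxOb]
            rw [mu_pf X x _]
            rw [hprod_image, hxcard, hX]
            unfold eX
            ring
          · intro x hxA hxΦ
            rw [Finset.mem_filter] at hxΦ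
            push_neg at hxΦ
            by_cases hxOb : Ob e A x
            · have hxcard : x.card ≠ k0 := hxΦ hxA hxOb
              rcases lt_or_gt_of_ne hxcard with hlt | hgt
              · -- smaller: Sd vanishes
                rw [Ff, if_pos hxOb, mu_pf X x _, hX]
                have hsub' : L.filter (fun l => l ≤ x.card) ⊆ L.filter (fun l => l ≤ k0) := by
                  intro l hl
                  rw [Finset.mem_filter] at hl ⊢
                  exact ⟨hl.1, le_trans hl.2 (le_of_lt hlt)⟩
                have hzero : Sd D (∏ r ∈ (L.filter (fun l => l ≤ x.card)).image (fun l : ℕ => (l:ℝ)), (Polynomial.X - Polynomial.C r)) = 0 := by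
                  apply Sd_prod_zero
                  rw [hcard_image]
                  apply Finset.card_lt_card
                  rw [Finset.ssubset_iff_of_subset hsub']
                  refine ⟨k0, Finset.mem_filter.mpr ⟨hk0L, le_refl _⟩, fun hc => ?_⟩
                  have := (Finset.mem_filter.mp hc).2
                  omega
                rw [hzero, mul_zero, mul_zero]
              · -- larger: coefficient vanishes by ih
                rw [ih x hxA hxOb (by omega), zero_mul]
            · rw [hU x hxA hxOb, zero_mul]
        rw [h2] at h1
        rcases mul_eq_zero.mp h1 with h | h
        · exact absurd h hcst
        · exact h
      -- (b) grade descent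
      have hdesc : ∀ i, ∀ X : Finset (Fin n), X.card + i = D → Rel X = 0 := by
        intro i
        induction i with
        | zero => intro X hX; exact hmu X (by omega)
        | succ i ihd =>
          intro X hX
          have h0 : ∑ y ∈ Finset.univ \ X, Rel (insert y X) = 0 := by
            apply Finset.sum_eq_zero
            intro y hy
            apply ihd
            rw [Finset.card_insert_of_notMem (Finset.mem_sdiff.mp hy).2]
            omega
          have h1 : ∑ y ∈ Finset.univ \ X, Rel (insert y X)
              = ∑ x ∈ Φ, γ x * (((k0 - X.card : ℕ) : ℝ) * eX X x) := by
            rw [hRel]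
            dsimp only
            rw [Finset.sum_comm]
            apply Finset.sum_congr rfl
            intro x hx
            rw [Finset.mem_filter] at hx
            obtain ⟨hxA, hxOb, hxcard⟩ := hx
            rw [← Finset.mul_sum]
            congr 1
            by_cases hXx : X ⊆ x
            · have hterm : ∀ y ∈ Finset.univ \ X, eX (insert y X) x = if y ∈ x then (1:ℝ) else 0 := by
                intro y _
                unfold eX
                by_cases hyx : y ∈ x
                · rw [if_pos hyx, if_pos (Finset.insert_subset hyx hXx)]
                · rw [if_neg hyx, if_neg (fun hc => hyx (hc (Finset.mem_insert_self _ _)))]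
              rw [Finset.sum_congr rfl hterm, Finset.sum_boole]
              have hfe : Finset.filter (· ∈ x) (Finset.univ \ X) = x \ X := by
                ext z
                simp only [Finset.mem_filter, Finset.mem_sdiff, Finset.mem_univ, true_and]
                tauto
              rw [hfe, Finset.card_sdiff_of_subset hXx, hxcard]
              unfold eX
              rw [if_pos hXx, mul_one]
            · have hterm : ∀ y ∈ Finset.univ \ X, eX (insert y X) x = 0 := by
                intro y _
                exact if_neg (fun hc => hXx ((Finset.subset_insert y X).trans hc))
              rw [Finset.sum_congr rfl hterm]
              unfold eX
              rw [if_neg hXx, mul_zero, Finset.sum_const_zero]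
          have h2 : ∑ x ∈ Φ, γ x * (((k0 - X.card : ℕ) : ℝ) * eX X x)
              = ((k0 - X.card : ℕ) : ℝ) * Rel X := by
            rw [hRel, Finset.mul_sum]
            apply Finset.sum_congr rfl
            intro x _
            ring
          rw [h1, h2] at h0
          rcases mul_eq_zero.mp h0 with h | h
          · exfalso
            have hXlt : X.card < k0 := by omega
            rw [Nat.cast_eq_zero] at h
            omega
          · exact h
      have hall : ∀ X : Finset (Fin n), X.card ≤ D → Rel X = 0 := by
        intro X hX
        exact hdesc (D - X.card) X (by omega)
      -- (c) final triangular step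
      obtain ⟨w, hw, hwB⟩ := expand T ((L.filter (fun l => l < k0)).image (fun l : ℕ => (l:ℝ)))
      have hwcard : ((L.filter (fun l => l < k0)).image (fun l : ℕ => (l:ℝ))).card ≤ D := by
        calc ((L.filter (fun l => l < k0)).image (fun l : ℕ => (l:ℝ))).card
            ≤ (L.filter (fun l => l < k0)).card := Finset.card_image_le
          _ ≤ D := by
              apply Finset.card_le_card
              intro l hl
              rw [Finset.mem_filter] at hl ⊢
              exact ⟨hl.1, le_of_lt hl.2⟩
      have h0 : ∑ X ∈ T.powerset, w X * Rel X = 0 := by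
        apply Finset.sum_eq_zero
        intro X _
        by_cases hwX : w X = 0
        · rw [hwX, zero_mul]
        · rw [hall X (le_trans (hw X hwX).2 hwcard), mul_zero]
      have h1 : ∑ X ∈ T.powerset, w X * Rel X
          = ∑ x ∈ Φ, γ x * pf T ((L.filter (fun l => l < k0)).image (fun l : ℕ => (l:ℝ))) x := by
        rw [hRel]
        dsimp only
        have hlhs : ∑ X ∈ T.powerset, w X * (∑ x ∈ Φ, γ x * eX X x)
            = ∑ x ∈ Φ, ∑ X ∈ T.powerset, γ x * (w X * eX X x) := by
          simp_rw [Finset.mul_sum]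
          rw [Finset.sum_comm]
          apply Finset.sum_congr rfl; intro X _
          apply Finset.sum_congr rfl; intro x _
          ring
        rw [hlhs]
        apply Finset.sum_congr rfl
        intro x _
        rw [← Finset.mul_sum, hwB x]
      have hTΦ : T ∈ Φ := by
        rw [hΦ, Finset.mem_filter]
        exact ⟨hT, hObT, rfl⟩
      have h2 : ∑ x ∈ Φ, γ x * pf T ((L.filter (fun l => l < k0)).image (fun l : ℕ => (l:ℝ))) x
          = γ T * pf T ((L.filter (fun l => l < k0)).image (fun l : ℕ => (l:ℝ))) T := by
        apply Finset.sum_eq_single_of_mem T hTΦ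
        intro x hx hxT
        rw [Finset.mem_filter] at hx
        obtain ⟨hxA, hxOb, hxcard⟩ := hx
        have htL : (x ∩ T).card ∈ L := hAL x hxA T hT hxT
        have htlt : (x ∩ T).card < k0 := by
          refine lt_of_le_of_ne (by rw [hk0]; exact Finset.card_le_card Finset.inter_subset_right) ?_
          intro hc
          apply hxT
          have h3 : x ∩ T = T := Finset.eq_of_subset_of_card_le Finset.inter_subset_right (by omega)
          have h4 : T ⊆ x := by rw [← h3]; exact Finset.inter_subset_left
          exact (Finset.eq_of_subset_of_card_le h4 (by omega)).symm
        have hzero : pf T ((L.filter (fun l => l < k0)).image (fun l : ℕ => (l:ℝ))) x = 0 := by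
          rw [pf]
          apply Finset.prod_eq_zero (i := (((x ∩ T).card : ℕ) : ℝ))
          · have hmem : (x ∩ T).card ∈ L.filter (fun l => l < k0) :=
              Finset.mem_filter.mpr ⟨htL, htlt⟩
            exact Finset.mem_image_of_mem (fun l : ℕ => (l : ℝ)) hmem
          · rw [sub_self]
        rw [hzero, mul_zero]
      have hpfne : pf T ((L.filter (fun l => l < k0)).image (fun l : ℕ => (l:ℝ))) T ≠ 0 := by
        rw [pf, Finset.prod_ne_zero_iff]
        intro r hr
        obtain ⟨l, hl, rfl⟩ := Finset.mem_image.mp hr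
        have hlk : l < k0 :=
          (Finset.mem_filter.mp (show l ∈ L.filter (fun x => x < k0) from hl)).2
        rw [Finset.inter_self]
        intro hc
        have : (l : ℝ) = (k0 : ℝ) := by
          rw [hk0] at *
          linarith [sub_eq_zero.mp hc]
        have : l = k0 := by exact_mod_cast this
        omega
      rw [h0, h2] at h1
      rcases mul_eq_zero.mp h1.symm with h | h
      · exact h
      · exact absurd h hpfne
  intro a ha
  by_cases hOb : Ob e A a
  · exact hOaux (n + 1) a ha hOb (by omega)
  · exact hU a ha hOb

theorem card_bound (L : Finset ℕ) (hLpos : ∀ x ∈ L, 0 < x) (e : Fin n)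
    (A : Finset (Finset (Fin n)))
    (hAL : ∀ a ∈ A, ∀ b ∈ A, a ≠ b → (a ∩ b).card ∈ L) :
    A.card ≤ ∑ j ∈ Finset.range (L.card + 1), ((Finset.univ.erase e).card).choose j := by
  classical
  set SS : Finset (Finset (Fin n) → ℝ) :=
    ((Finset.univ.erase e).powerset.filter (fun X => X.card ≤ L.card)).image eX with hSS
  have hpf_mem : ∀ (E' : Finset (Fin n)) (R : Finset ℝ), E' ⊆ Finset.univ.erase e →
      R.card ≤ L.card → pf E' R ∈ Submodule.span ℝ (SS : Set (Finset (Fin n) → ℝ)) := by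
    intro E' R hE' hR
    obtain ⟨w, hw, hwB⟩ := expand E' R
    have heq : pf E' R = ∑ X ∈ E'.powerset, w X • eX X := by
      funext B
      rw [hwB B, Finset.sum_apply]
      apply Finset.sum_congr rfl
      intro X _
      simp [smul_eq_mul]
    rw [heq]
    apply Submodule.sum_mem
    intro X hX
    by_cases hwX : w X = 0
    · rw [hwX, zero_smul]; exact Submodule.zero_mem _
    · apply Submodule.smul_mem
      apply Submodule.subset_span
      rw [Finset.mem_coe, hSS, Finset.mem_image]
      refine ⟨X, ?_, rfl⟩
      rw [Finset.mem_filter, Finset.mem_powerset]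
      exact ⟨(hw X hwX).1.trans hE', le_trans (hw X hwX).2 hR⟩
  have hmem : ∀ a ∈ A, Ff L e A a ∈ Submodule.span ℝ (SS : Set (Finset (Fin n) → ℝ)) := by
    intro a _
    rw [Ff]
    by_cases hOb : Ob e A a
    · rw [if_pos hOb]
      apply hpf_mem
      · rw [Finset.subset_erase]
        exact ⟨Finset.subset_univ a, hOb.1⟩
      · calc ((L.filter (· ≤ a.card)).image (fun l : ℕ => (l:ℝ))).card
            ≤ (L.filter (· ≤ a.card)).card := Finset.card_image_le
          _ ≤ L.card := Finset.card_filter_le _ _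
    · rw [if_neg hOb]
      apply hpf_mem
      · exact Finset.erase_subset_erase e (Finset.subset_univ a)
      · calc ((L.filter (· < a.card)).image (fun l : ℕ => (l:ℝ) - epsR e a)).card
            ≤ (L.filter (· < a.card)).card := Finset.card_image_le
          _ ≤ L.card := Finset.card_filter_le _ _
  have hind : LinearIndependent ℝ (fun i : ↑A => Ff L e A ↑i) := by
    rw [Fintype.linearIndependent_iff]
    intro g hg i
    set γ : Finset (Fin n) → ℝ := fun x => if h : x ∈ A then g ⟨x, h⟩ else 0 with hγdef
    have hγ : ∀ i : ↑A, γ ↑i = g i := by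
      intro i
      rw [hγdef]
      exact dif_pos i.2
    have hrel : ∀ B, ∑ a ∈ A, γ a * Ff L e A a B = 0 := by
      intro B
      have h1 : ∑ a ∈ A, γ a * Ff L e A a B = ∑ i : ↑A, g i * Ff L e A ↑i B := by
        rw [← Finset.sum_coe_sort A (fun a => γ a * Ff L e A a B)]
        apply Finset.sum_congr rfl
        intro i _
        rw [hγ i]
      have h2 := congrFun hg B
      rw [Finset.sum_apply] at h2
      simp only [Pi.smul_apply, smul_eq_mul] at h2
      rw [h1]
      exact h2
    have := indep L hLpos e A hAL γ hrel ↑i i.2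
    rw [hγ i] at this
    exact this
  haveI : FiniteDimensional ℝ (Submodule.span ℝ (SS : Set (Finset (Fin n) → ℝ))) :=
    FiniteDimensional.span_finset ℝ SS
  set W := Submodule.span ℝ (SS : Set (Finset (Fin n) → ℝ)) with hW
  let v' : ↑A → W := fun i => ⟨Ff L e A ↑i, hmem ↑i i.2⟩
  have hind' : LinearIndependent ℝ v' := by
    apply LinearIndependent.of_comp W.subtype
    exact hind
  have h1 : Fintype.card ↑A ≤ Module.finrank ℝ W := hind'.fintype_card_le_finrank
  have h2 : Module.finrank ℝ W ≤ SS.card := finrank_span_finset_le_card SS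
  have h3 : SS.card ≤ ((Finset.univ.erase e).powerset.filter (fun X => X.card ≤ L.card)).card :=
    Finset.card_image_le
  have h4 : ((Finset.univ.erase e).powerset.filter (fun X => X.card ≤ L.card)).card
      = ∑ j ∈ Finset.range (L.card + 1), ((Finset.univ.erase e).card).choose j := by
    have hpart : (Finset.univ.erase e).powerset.filter (fun X => X.card ≤ L.card)
        = (Finset.range (L.card + 1)).biUnion
            (fun j => Finset.powersetCard j (Finset.univ.erase e)) := by
      ext X
      simp only [Finset.mem_filter, Finset.mem_powerset, Finset.mem_biUnion, Finset.mem_range,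
        Finset.mem_powersetCard, Nat.lt_succ_iff]
      constructor
      · rintro ⟨hsub, hcard⟩; exact ⟨X.card, hcard, hsub, rfl⟩
      · rintro ⟨j, hj, hsub, rfl⟩; exact ⟨hsub, hj⟩
    rw [hpart, Finset.card_biUnion]
    · apply Finset.sum_congr rfl
      intro j _
      rw [Finset.card_powersetCard]
    · intro j _ k _ hjk
      rw [Function.onFun, Finset.disjoint_left]
      intro X hXj hXk
      rw [Finset.mem_powersetCard] at hXj hXk
      omega
  have h5 : Fintype.card ↑A = A.card := Fintype.card_coe A
  omega

theorem snevily (n s : ℕ) (L : Finset ℕ) (hL : L.card = s) (hLpos : ∀ x ∈ L, 0 < x)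
    (A : Finset (Finset (Fin n)))
    (hAL : ∀ a ∈ A, ∀ b ∈ A, a ≠ b → (a ∩ b).card ∈ L) :
    A.card ≤ ∑ j ∈ Finset.range (s + 1), (n - 1).choose j := by
  classical
  subst hL
  cases n with
  | zero =>
    have h1 : A.card ≤ 1 := by
      calc A.card ≤ (Finset.univ : Finset (Finset (Fin 0))).card :=
            Finset.card_le_univ A
        _ = 1 := by
            rw [Finset.card_univ, Fintype.card_finset, Fintype.card_fin]
            norm_num
    refine le_trans h1 ?_
    calc (1:ℕ) = (0 - 1 : ℕ).choose 0 := by norm_num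
      _ ≤ ∑ j ∈ Finset.range (L.card + 1), (0 - 1 : ℕ).choose j := by
          apply Finset.single_le_sum (f := fun j => (0 - 1 : ℕ).choose j)
          · intro j _; exact Nat.zero_le _
          · exact Finset.mem_range.mpr (Nat.succ_pos _)
  | succ m =>
    have hbound := card_bound L hLpos (⟨0, Nat.succ_pos m⟩ : Fin (m+1)) A hAL
    have hcard : (Finset.univ.erase (⟨0, Nat.succ_pos m⟩ : Fin (m+1))).card = m := by
      rw [Finset.card_erase_of_mem (Finset.mem_univ _), Finset.card_univ, Fintype.card_fin]
      omega
    rw [hcard] at hbound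
    simpa using hbound

end Snevily


/-- **Theorem 1.5 (Snevily).** Let `ℒ` be a set of `s` positive integers. If `𝒜` is an
`ℒ`-intersecting family of (pairwise distinct) subsets of `[n]`, then
`|𝒜| ≤ C(n-1, s) + C(n-1, s-1) + ⋯ + C(n-1, 0)`. -/
theorem stmt_17 (n s : ℕ) (L : Finset ℕ) (hL : L.card = s) (hLpos : ∀ x ∈ L, 0 < x)
    (A : Finset (Finset (Fin n)))
    (hAL : ∀ a ∈ A, ∀ b ∈ A, a ≠ b → (a ∩ b).card ∈ L) :
    A.card ≤ ∑ j ∈ Finset.range (s + 1), (n - 1).choose j :=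
  Snevily.snevily n s L hL hLpos A hAL
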